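/- Let S = [[A, B], [B*, G]] : H ⊕ K → H ⊕ K and K = [[K₁₁, K₁₂], [K₁₂*, K₂₂]] : M ⊕ H → M ⊕ H be selfadjoint contractions with ‖K₂₂‖ < 1, and let Ω(z) = A + zB(I − zG)⁻¹B* be the transfer function of the passive selfadjoint system σ = {S; H, H, K}. Define the Redheffer product T := K • S as the block operator on M ⊕ K with entries T₁₁ = K₁₁ + K₁₂ A (I − K₂₂A)⁻¹ K₁₂*, T₁₂ = K₁₂ (I − AK₂₂)⁻¹ B, T₂₁ = B* (I − K₂₂A)⁻¹ K₁₂*, T₂₂ = G + B* K₂₂ (I − AK₂₂)⁻¹ B. Then T is a selfadjoint contraction on M ⊕ K, and the transfer function of the passive selfadjoint system τ = {T; M, M, K}, namely T₁₁ + zT₁₂(I − zT₂₂)⁻¹T₂₁, equals Θ(z) := K₁₁ + K₁₂ Ω(z) (I − K₂₂Ω(z))⁻¹ K₁₂* for all z ∈ Z := ℂ ∖ ((−∞,−1] ∪ [1,+∞)). -/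

import Mathlib

open Complex ContinuousLinearMap

noncomputable section

variable {M H K : Type*} [NormedAddCommGroup M] [InnerProductSpace ℂ M] [CompleteSpace M]
  [TopologicalSpace.SeparableSpace M]
  [NormedAddCommGroup H] [InnerProductSpace ℂ H] [CompleteSpace H]
  [TopologicalSpace.SeparableSpace H]
  [NormedAddCommGroup K] [InnerProductSpace ℂ K] [CompleteSpace K]
  [TopologicalSpace.SeparableSpace K]

/-- The domain `Z = ℂ ∖ ((−∞,−1] ∪ [1,+∞))`. -/
def Zdom : Set ℂ := {z : ℂ | z ∉ (fun x : ℝ => (x : ℂ)) '' (Set.Iic (-1) ∪ Set.Ici 1)}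

/-- The `2×2` block operator `[[D, C], [B, F]]` on the Hilbert direct sum `E ⊕ E'`. -/
def blockOp {E E' : Type*} [NormedAddCommGroup E] [InnerProductSpace ℂ E] [CompleteSpace E]
    [NormedAddCommGroup E'] [InnerProductSpace ℂ E'] [CompleteSpace E']
    (D : E →L[ℂ] E) (C : E' →L[ℂ] E) (B : E →L[ℂ] E') (F : E' →L[ℂ] E') :
    WithLp 2 (E × E') →L[ℂ] WithLp 2 (E × E') :=
  ((WithLp.prodContinuousLinearEquiv 2 ℂ E E').symm : (E × E') →L[ℂ] WithLp 2 (E × E')) ∘L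
    ((D ∘L ContinuousLinearMap.fst ℂ E E' + C ∘L ContinuousLinearMap.snd ℂ E E').prod
      (B ∘L ContinuousLinearMap.fst ℂ E E' + F ∘L ContinuousLinearMap.snd ℂ E E')) ∘L
    ((WithLp.prodContinuousLinearEquiv 2 ℂ E E') : WithLp 2 (E × E') →L[ℂ] (E × E'))

/-- The transfer function `z ↦ D + zC(I − zF)⁻¹B` of the system with block operator
`[[D, C], [B, F]]`. -/
def transfer {E E' : Type*} [NormedAddCommGroup E] [InnerProductSpace ℂ E] [CompleteSpace E]
    [NormedAddCommGroup E'] [InnerProductSpace ℂ E'] [CompleteSpace E']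
    (D : E →L[ℂ] E) (C : E' →L[ℂ] E) (B : E →L[ℂ] E') (F : E' →L[ℂ] E') (z : ℂ) :
    E →L[ℂ] E :=
  D + z • (C ∘L Ring.inverse ((1 : E' →L[ℂ] E') - z • F) ∘L B)

section RedhefferHelpers

variable {E E' : Type*} [NormedAddCommGroup E] [InnerProductSpace ℂ E] [CompleteSpace E]
    [NormedAddCommGroup E'] [InnerProductSpace ℂ E'] [CompleteSpace E']

theorem blockOp_fst' (D : E →L[ℂ] E) (C : E' →L[ℂ] E) (B : E →L[ℂ] E') (F : E' →L[ℂ] E')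
    (x : WithLp 2 (E × E')) : (blockOp D C B F x).fst = D x.fst + C x.snd := rfl

theorem blockOp_snd' (D : E →L[ℂ] E) (C : E' →L[ℂ] E) (B : E →L[ℂ] E') (F : E' →L[ℂ] E')
    (x : WithLp 2 (E × E')) : (blockOp D C B F x).snd = B x.fst + F x.snd := rfl

theorem block_contr_sq (D : E →L[ℂ] E) (C : E' →L[ℂ] E) (B : E →L[ℂ] E') (F : E' →L[ℂ] E')
    (hc : ‖blockOp D C B F‖ ≤ 1) (a : E) (b : E') :
    ‖D a + C b‖ ^ 2 + ‖B a + F b‖ ^ 2 ≤ ‖a‖ ^ 2 + ‖b‖ ^ 2 := by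
  set x : WithLp 2 (E × E') := (WithLp.equiv 2 (E × E')).symm (a, b) with hx
  have hx1 : x.fst = a := rfl
  have hx2 : x.snd = b := rfl
  have h1 : ‖blockOp D C B F x‖ ≤ ‖x‖ := by
    calc ‖blockOp D C B F x‖ ≤ ‖blockOp D C B F‖ * ‖x‖ := le_opNorm _ x
    _ ≤ 1 * ‖x‖ := by gcongr
    _ = ‖x‖ := one_mul _
  have h2 : ‖blockOp D C B F x‖ ^ 2 ≤ ‖x‖ ^ 2 :=
    pow_le_pow_left₀ (norm_nonneg _) h1 2
  rw [WithLp.prod_norm_sq_eq_of_L2, WithLp.prod_norm_sq_eq_of_L2, blockOp_fst', blockOp_snd',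
    hx1, hx2] at h2
  exact h2

theorem corner_fst_norm (D : E →L[ℂ] E) (C : E' →L[ℂ] E) (B : E →L[ℂ] E') (F : E' →L[ℂ] E')
    (hc : ‖blockOp D C B F‖ ≤ 1) : ‖D‖ ≤ 1 := by
  refine ContinuousLinearMap.opNorm_le_bound _ zero_le_one fun a => ?_
  rw [one_mul]
  have := block_contr_sq D C B F hc a 0
  simp only [map_zero, add_zero, norm_zero] at this
  nlinarith [norm_nonneg (D a), norm_nonneg a, norm_nonneg (B a), sq_nonneg (‖B a‖)]

theorem corner_snd_norm (D : E →L[ℂ] E) (C : E' →L[ℂ] E) (B : E →L[ℂ] E') (F : E' →L[ℂ] E')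
    (hc : ‖blockOp D C B F‖ ≤ 1) : ‖F‖ ≤ 1 := by
  refine ContinuousLinearMap.opNorm_le_bound _ zero_le_one fun b => ?_
  rw [one_mul]
  have := block_contr_sq D C B F hc 0 b
  simp only [map_zero, zero_add, norm_zero] at this
  nlinarith [norm_nonneg (F b), norm_nonneg b, norm_nonneg (C b)]

theorem blockOp_isSelfAdjoint (D : E →L[ℂ] E) (C : E' →L[ℂ] E) (F : E' →L[ℂ] E')
    (hD : IsSelfAdjoint D) (hF : IsSelfAdjoint F) :
    IsSelfAdjoint (blockOp D C (adjoint C) F) := by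
  rw [ContinuousLinearMap.isSelfAdjoint_iff_isSymmetric]
  intro x y
  have hDi : ∀ a c : E, (inner ℂ (D a) c : ℂ) = inner ℂ a (D c) := fun a c => by
    conv_lhs => rw [← hD.adjoint_eq]
    exact ContinuousLinearMap.adjoint_inner_left D c a
  have hFi : ∀ a c : E', (inner ℂ (F a) c : ℂ) = inner ℂ a (F c) := fun a c => by
    conv_lhs => rw [← hF.adjoint_eq]
    exact ContinuousLinearMap.adjoint_inner_left F c a
  simp only [ContinuousLinearMap.coe_coe, WithLp.prod_inner_apply, WithLp.ofLp_fst, WithLp.ofLp_snd, blockOp_fst', blockOp_snd',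
    inner_add_left, inner_add_right, ContinuousLinearMap.adjoint_inner_left,
    ContinuousLinearMap.adjoint_inner_right, hDi, hFi]
  ring

theorem isUnit_one_sub_smul_sa {T : E →L[ℂ] E} (hT : IsSelfAdjoint T)
    (hTn : ‖T‖ ≤ 1) {z : ℂ} (hz : z ∈ Zdom) : IsUnit ((1 : E →L[ℂ] E) - z • T) := by
  rcases eq_or_ne z 0 with rfl | hz0
  · simp
  have hmem : (z⁻¹ : ℂ) ∉ spectrum ℂ T := by
    intro hmem
    have hre := hT.mem_spectrum_eq_re hmem
    have hone : ‖(1 : E →L[ℂ] E)‖ ≤ 1 := by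
      rw [ContinuousLinearMap.one_def]; exact ContinuousLinearMap.norm_id_le
    have hnorm : ‖(z⁻¹ : ℂ)‖ ≤ 1 := by
      have h2 := spectrum.norm_le_norm_mul_of_mem hmem
      nlinarith [norm_nonneg T, norm_nonneg (1 : E →L[ℂ] E), norm_nonneg (z⁻¹ : ℂ)]
    set x := (z⁻¹ : ℂ).re with hxdef
    have hx0 : x ≠ 0 := by
      intro h0
      rw [h0] at hre
      exact inv_ne_zero hz0 (by simpa using hre)
    have hxabs : |x| ≤ 1 := by
      rw [hre] at hnorm
      simpa using hnorm
    have hzx : z = ((x⁻¹ : ℝ) : ℂ) := by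
      have : z⁻¹ = ((x : ℝ) : ℂ) := hre
      rw [Complex.ofReal_inv, ← this, inv_inv]
    apply hz
    refine ⟨x⁻¹, ?_, hzx.symm⟩
    rcases lt_or_gt_of_ne hx0 with hneg | hpos
    · left
      simp only [Set.mem_Iic]
      rw [abs_of_neg hneg] at hxabs
      nlinarith [mul_inv_cancel₀ hx0, inv_lt_zero.mpr hneg]
    · right
      simp only [Set.mem_Ici]
      rw [abs_of_pos hpos] at hxabs
      nlinarith [mul_inv_cancel₀ hx0, inv_pos.mpr hpos]
  rw [spectrum.notMem_iff] at hmem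
  have heq : (1 : E →L[ℂ] E) - z • T = z • (algebraMap ℂ (E →L[ℂ] E) z⁻¹ - T) := by
    rw [smul_sub, Algebra.algebraMap_eq_smul_one, smul_smul, mul_inv_cancel₀ hz0, one_smul]
  rw [heq, Algebra.smul_def]
  exact ((isUnit_iff_ne_zero.mpr hz0).map (algebraMap ℂ (E →L[ℂ] E))).mul hmem

end RedhefferHelpers

set_option maxHeartbeats 4000000 in
/-- **Redheffer product.** Given selfadjoint contractions
`S = [[A, B], [B*, G]]` on `H ⊕ K` and `K = [[K₁₁, K₁₂], [K₁₂*, K₂₂]]` on `M ⊕ H` with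
`‖K₂₂‖ < 1`, the Redheffer product `T = K • S` is a selfadjoint contraction on `M ⊕ K`
whose transfer function equals `Θ(z) = K₁₁ + K₁₂Ω(z)(I − K₂₂Ω(z))⁻¹K₁₂*`, where `Ω` is
the transfer function of `{S; H, H, K}`. -/
theorem redheffer_product_realization
    (A : H →L[ℂ] H) (B : K →L[ℂ] H) (G : K →L[ℂ] K)
    (hA : IsSelfAdjoint A) (hG : IsSelfAdjoint G)
    (hSsa : IsSelfAdjoint (blockOp A B (adjoint B) G))
    (hScontr : ‖blockOp A B (adjoint B) G‖ ≤ 1)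
    (K11 : M →L[ℂ] M) (K12 : H →L[ℂ] M) (K22 : H →L[ℂ] H)
    (hK11 : IsSelfAdjoint K11) (hK22 : IsSelfAdjoint K22)
    (hKsa : IsSelfAdjoint (blockOp K11 K12 (adjoint K12) K22))
    (hKcontr : ‖blockOp K11 K12 (adjoint K12) K22‖ ≤ 1)
    (hK22norm : ‖K22‖ < 1) :
    IsSelfAdjoint (blockOp
      (K11 + K12 ∘L A ∘L Ring.inverse ((1 : H →L[ℂ] H) - K22 ∘L A) ∘L adjoint K12)
      (K12 ∘L Ring.inverse ((1 : H →L[ℂ] H) - A ∘L K22) ∘L B)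
      (adjoint B ∘L Ring.inverse ((1 : H →L[ℂ] H) - K22 ∘L A) ∘L adjoint K12)
      (G + adjoint B ∘L K22 ∘L Ring.inverse ((1 : H →L[ℂ] H) - A ∘L K22) ∘L B)) ∧
    ‖blockOp
      (K11 + K12 ∘L A ∘L Ring.inverse ((1 : H →L[ℂ] H) - K22 ∘L A) ∘L adjoint K12)
      (K12 ∘L Ring.inverse ((1 : H →L[ℂ] H) - A ∘L K22) ∘L B)
      (adjoint B ∘L Ring.inverse ((1 : H →L[ℂ] H) - K22 ∘L A) ∘L adjoint K12)
      (G + adjoint B ∘L K22 ∘L Ring.inverse ((1 : H →L[ℂ] H) - A ∘L K22) ∘L B)‖ ≤ 1 ∧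
    (∀ z ∈ Zdom,
      transfer
        (K11 + K12 ∘L A ∘L Ring.inverse ((1 : H →L[ℂ] H) - K22 ∘L A) ∘L adjoint K12)
        (K12 ∘L Ring.inverse ((1 : H →L[ℂ] H) - A ∘L K22) ∘L B)
        (adjoint B ∘L Ring.inverse ((1 : H →L[ℂ] H) - K22 ∘L A) ∘L adjoint K12)
        (G + adjoint B ∘L K22 ∘L Ring.inverse ((1 : H →L[ℂ] H) - A ∘L K22) ∘L B) z =
      K11 + K12 ∘L (transfer A B (adjoint B) G z ∘L
        Ring.inverse ((1 : H →L[ℂ] H) - K22 ∘L transfer A B (adjoint B) G z)) ∘L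
          adjoint K12) := by
  have hAn : ‖A‖ ≤ 1 := corner_fst_norm _ _ _ _ hScontr
  have hGn : ‖G‖ ≤ 1 := corner_snd_norm _ _ _ _ hScontr
  set Bs := adjoint B with hBsdef
  set Ks := adjoint K12 with hKsdef
  have hNu : IsUnit ((1 : H →L[ℂ] H) - K22 ∘L A) := by
    refine (Units.oneSub _ (lt_of_le_of_lt (ContinuousLinearMap.opNorm_comp_le _ _) ?_)).isUnit
    nlinarith [norm_nonneg K22, norm_nonneg A]
  have hN'u : IsUnit ((1 : H →L[ℂ] H) - A ∘L K22) := by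
    refine (Units.oneSub _ (lt_of_le_of_lt (ContinuousLinearMap.opNorm_comp_le _ _) ?_)).isUnit
    nlinarith [norm_nonneg K22, norm_nonneg A]
  set Ni := Ring.inverse ((1 : H →L[ℂ] H) - K22 ∘L A) with hNidef
  set N'i := Ring.inverse ((1 : H →L[ℂ] H) - A ∘L K22) with hN'idef
  have pN : ∀ v : H, Ni v - K22 (A (Ni v)) = v := fun v => by
    simpa [← hNidef] using DFunLike.congr_fun (Ring.mul_inverse_cancel _ hNu) v
  have pNi : ∀ v : H, Ni (v - K22 (A v)) = v := fun v => by
    simpa [← hNidef] using DFunLike.congr_fun (Ring.inverse_mul_cancel _ hNu) v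
  have pN' : ∀ v : H, N'i v - A (K22 (N'i v)) = v := fun v => by
    simpa [← hN'idef] using DFunLike.congr_fun (Ring.mul_inverse_cancel _ hN'u) v
  have pN'i : ∀ v : H, N'i (v - A (K22 v)) = v := fun v => by
    simpa [← hN'idef] using DFunLike.congr_fun (Ring.inverse_mul_cancel _ hN'u) v
  have pAN : ∀ v : H, A (Ni v) = N'i (A v) := fun v => by
    have h := pN'i (A (Ni v))
    rw [← map_sub A, pN v] at h
    exact h.symm
  have pNK : ∀ v : H, Ni (K22 v) = K22 (N'i v) := fun v => by
    have h := pNi (K22 (N'i v))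
    rw [← map_sub K22, pN' v] at h
    exact h
  have pANK : ∀ v : H, A (Ni (K22 v)) = N'i v - v := fun v => by
    rw [pAN (K22 v)]
    have h := pN'i v
    rw [map_sub] at h
    set Y := N'i (A (K22 v)) with hY
    set X := N'i v with hX
    rw [← h]; abel
  set T11 := K11 + K12 ∘L A ∘L Ni ∘L Ks with hT11def
  set T12 := K12 ∘L N'i ∘L B with hT12def
  set T21 := Bs ∘L Ni ∘L Ks with hT21def
  set T22 := G + Bs ∘L K22 ∘L N'i ∘L B with hT22def
  have pT11 : ∀ m : M, T11 m = K11 m + K12 (A (Ni (Ks m))) := fun m => rfl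
  have pT12 : ∀ k : K, T12 k = K12 (N'i (B k)) := fun k => rfl
  have pT21 : ∀ m : M, T21 m = Bs (Ni (Ks m)) := fun m => rfl
  have pT22 : ∀ k : K, T22 k = G k + Bs (K22 (N'i (B k))) := fun k => rfl
  -- adjoint facts
  have hstarN : adjoint Ni = N'i := by
    rw [← ContinuousLinearMap.star_eq_adjoint, hNidef, ← Ring.inverse_star, hN'idef]
    congr 1
    rw [star_sub, star_one]
    congr 1
    calc star (K22 ∘L A) = star (K22 * A) := rfl
      _ = star A * star K22 := star_mul _ _
      _ = A ∘L K22 := by rw [hA.star_eq, hK22.star_eq]; rfl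
  have hstarN' : adjoint N'i = Ni := by
    rw [← ContinuousLinearMap.star_eq_adjoint, hN'idef, ← Ring.inverse_star, hNidef]
    congr 1
    rw [star_sub, star_one]
    congr 1
    calc star (A ∘L K22) = star (A * K22) := rfl
      _ = star K22 * star A := star_mul _ _
      _ = K22 ∘L A := by rw [hA.star_eq, hK22.star_eq]; rfl
  have hT11sa : IsSelfAdjoint T11 := by
    rw [hT11def]
    refine hK11.add ?_
    rw [isSelfAdjoint_iff']
    have hadj : adjoint (K12 ∘L A ∘L Ni ∘L Ks) = ((K12 ∘L N'i) ∘L A) ∘L Ks := by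
      rw [ContinuousLinearMap.adjoint_comp, ContinuousLinearMap.adjoint_comp,
        ContinuousLinearMap.adjoint_comp, hKsdef, ContinuousLinearMap.adjoint_adjoint,
        hstarN, hA.adjoint_eq]
    rw [hadj]
    ext v
    simp only [ContinuousLinearMap.comp_apply]
    rw [← pAN]
  have hT22sa : IsSelfAdjoint T22 := by
    rw [hT22def]
    refine hG.add ?_
    rw [isSelfAdjoint_iff']
    have hadj : adjoint (Bs ∘L K22 ∘L N'i ∘L B) = ((Bs ∘L Ni) ∘L K22) ∘L B := by
      rw [ContinuousLinearMap.adjoint_comp, ContinuousLinearMap.adjoint_comp,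
        ContinuousLinearMap.adjoint_comp, hBsdef, ContinuousLinearMap.adjoint_adjoint,
        hstarN', hK22.adjoint_eq]
    rw [hadj]
    ext v
    simp only [ContinuousLinearMap.comp_apply]
    rw [pNK]
  have hT12adj : adjoint T12 = T21 := by
    rw [hT12def, hT21def]
    rw [ContinuousLinearMap.adjoint_comp, ContinuousLinearMap.adjoint_comp, hstarN', hBsdef]
    ext v
    simp only [ContinuousLinearMap.comp_apply]
    rfl
  -- Part 2 : contraction
  have hTcontr : ‖blockOp T11 T12 T21 T22‖ ≤ 1 := by
    refine ContinuousLinearMap.opNorm_le_bound _ zero_le_one fun x => ?_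
    rw [one_mul]
    set m := x.fst with hmdef
    set k := x.snd with hkdef
    set hv := Ni (Ks m + K22 (B k)) with hhv
    set h' := A hv + B k with hh'
    have hAhv : A hv = A (Ni (Ks m)) + (N'i (B k) - B k) := by
      rw [hhv, map_add Ni, map_add A, pANK]
    have hfst : (blockOp T11 T12 T21 T22 x).fst = K11 m + K12 h' := by
      rw [blockOp_fst']
      calc T11 m + T12 k = K11 m + K12 (A (Ni (Ks m))) + K12 (N'i (B k)) := by
            rw [pT11, pT12]
        _ = K11 m + K12 h' := by
            rw [hh', hAhv]
            simp only [map_add, map_sub]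
            abel
    have hsnd : (blockOp T11 T12 T21 T22 x).snd = Bs hv + G k := by
      rw [blockOp_snd']
      calc T21 m + T22 k = Bs (Ni (Ks m)) + (G k + Bs (K22 (N'i (B k)))) := by
            rw [pT21, pT22]
        _ = Bs hv + G k := by
            rw [hhv, map_add Ni, map_add Bs, pNK]; abel
    have hcl : Ks m + K22 h' = hv := by
      have h := pN (Ks m + K22 (B k))
      rw [← hhv] at h
      rw [sub_eq_iff_eq_add] at h
      rw [hh', map_add K22]
      conv_rhs => rw [h]
      abel
    have e1 := block_contr_sq K11 K12 Ks K22 hKcontr m h'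
    rw [hcl] at e1
    have e2 := block_contr_sq A B Bs G hScontr hv k
    rw [← hh'] at e2
    have e0 : ‖blockOp T11 T12 T21 T22 x‖ ^ 2 = ‖K11 m + K12 h'‖ ^ 2 + ‖Bs hv + G k‖ ^ 2 := by
      rw [WithLp.prod_norm_sq_eq_of_L2, hfst, hsnd]
    have ex : ‖x‖ ^ 2 = ‖m‖ ^ 2 + ‖k‖ ^ 2 := WithLp.prod_norm_sq_eq_of_L2 x
    nlinarith [norm_nonneg (blockOp T11 T12 T21 T22 x), norm_nonneg x]
  refine ⟨?_, hTcontr, ?_⟩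
  · rw [← hT12adj]
    exact blockOp_isSelfAdjoint T11 T12 T22 hT11sa hT22sa
  -- Part 3 : transfer function
  intro z hz
  have hT22n : ‖T22‖ ≤ 1 := corner_snd_norm T11 T12 T21 T22 hTcontr
  have hRu : IsUnit ((1 : K →L[ℂ] K) - z • G) := isUnit_one_sub_smul_sa hG hGn hz
  have hQu : IsUnit ((1 : K →L[ℂ] K) - z • T22) := isUnit_one_sub_smul_sa hT22sa hT22n hz
  simp only [transfer]
  set Ri := Ring.inverse ((1 : K →L[ℂ] K) - z • G) with hRidef
  set Qi := Ring.inverse ((1 : K →L[ℂ] K) - z • T22) with hQidef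
  have pR1 : ∀ v : K, Ri v - z • G (Ri v) = v := fun v => by
    simpa [← hRidef] using DFunLike.congr_fun (Ring.mul_inverse_cancel _ hRu) v
  have pR2 : ∀ v : K, Ri (v - z • G v) = v := fun v => by
    simpa [← hRidef] using DFunLike.congr_fun (Ring.inverse_mul_cancel _ hRu) v
  have pQ1 : ∀ v : K, Qi v - z • T22 (Qi v) = v := fun v => by
    simpa [← hQidef] using DFunLike.congr_fun (Ring.mul_inverse_cancel _ hQu) v
  have pQ2 : ∀ v : K, Qi (v - z • T22 v) = v := fun v => by
    simpa [← hQidef] using DFunLike.congr_fun (Ring.inverse_mul_cancel _ hQu) v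
  have pRG : ∀ v : K, z • Ri (G v) = Ri v - v := fun v => by
    have h := pR2 v
    rw [map_sub, map_smul] at h
    set Y := z • Ri (G v) with hY
    set X := Ri v with hX
    rw [← h]; abel
  have pGR : ∀ v : K, z • G (Ri v) = Ri v - v := fun v => by
    have h := pR1 v
    set Y := z • G (Ri v) with hY
    set X := Ri v with hX
    rw [← h]; abel
  have pQT : ∀ v : K, z • T22 (Qi v) = Qi v - v := fun v => by
    have h := pQ1 v
    set Y := z • T22 (Qi v) with hY
    set X := Qi v with hX
    rw [← h]; abel
  have hBNK : ∀ w : K, Bs (Ni (K22 (B w))) = T22 w - G w := fun w => by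
    rw [pNK (B w), pT22]; abel
  have hkey : ∀ a : H, z • Ri (Bs (Ni (K22 (B (Qi (Bs a)))))) = Qi (Bs a) - Ri (Bs a) :=
    fun a => by
    rw [hBNK (Qi (Bs a)), map_sub Ri, smul_sub, pRG (Qi (Bs a)), ← map_smul Ri,
      pQT (Bs a), map_sub Ri]
    abel
  set Om := A + z • (B ∘L Ri ∘L Bs) with hOmdef
  set P := (1 : H →L[ℂ] H) - K22 ∘L Om with hPdef
  set PiOp := (1 + z • (Ni ∘L K22 ∘L B ∘L Qi ∘L Bs)) ∘L Ni with hPiOpdef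
  have pOm : ∀ v : H, Om v = A v + z • B (Ri (Bs v)) := fun v => rfl
  have pPi : ∀ u : H, PiOp u = Ni u + z • Ni (K22 (B (Qi (Bs (Ni u))))) := fun u => rfl
  have hOmPi : ∀ u : H, Om (PiOp u) = A (Ni u) + z • N'i (B (Qi (Bs (Ni u)))) := fun u => by
    rw [pOm, pPi]
    rw [map_add A, map_smul A, pANK (B (Qi (Bs (Ni u))))]
    rw [map_add Bs, map_smul Bs, map_add Ri, map_smul Ri, hkey (Ni u)]
    rw [map_add B, map_sub B]
    simp only [smul_add, smul_sub]
    abel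
  have hPPi : ∀ v : H, P (PiOp v) = v := fun v => by
    have : P (PiOp v) = PiOp v - K22 (Om (PiOp v)) := rfl
    rw [this, hOmPi v, pPi v, pNK (B (Qi (Bs (Ni v)))), map_add K22, map_smul K22]
    have h := pN v
    set W := z • K22 (N'i (B (Qi (Bs (Ni v))))) with hW
    set X := Ni v with hX
    set Z := K22 (A X) with hZ
    rw [← h]; abel
  have hPiP : ∀ v : H, PiOp (P v) = v := fun v => by
    have hPv : P v = v - K22 (A v) - z • K22 (B (Ri (Bs v))) := by
      have : P v = v - K22 (Om v) := rfl
      rw [this, pOm, map_add K22, map_smul K22]; abel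
    have hNiPv : Ni (P v) = v - z • Ni (K22 (B (Ri (Bs v)))) := by
      rw [hPv, map_sub Ni, map_smul Ni, pNi v]
    have hBsNiPv : Bs (Ni (P v)) = Ri (Bs v) - z • T22 (Ri (Bs v)) := by
      rw [hNiPv, map_sub Bs, map_smul Bs, hBNK (Ri (Bs v)), smul_sub, pGR (Bs v)]
      abel
    have hQiBs : Qi (Bs (Ni (P v))) = Ri (Bs v) := by
      rw [hBsNiPv]; exact pQ2 (Ri (Bs v))
    rw [pPi (P v), hQiBs, hNiPv]
    abel
  have hPPi' : P ∘L PiOp = 1 := by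
    ext v
    simp only [ContinuousLinearMap.comp_apply, ContinuousLinearMap.one_apply]
    exact hPPi v
  have hPiP' : PiOp ∘L P = 1 := by
    ext v
    simp only [ContinuousLinearMap.comp_apply, ContinuousLinearMap.one_apply]
    exact hPiP v
  have hRinvP : Ring.inverse P = PiOp := Ring.inverse_unit ⟨P, PiOp, hPPi', hPiP'⟩
  rw [hRinvP]
  ext m
  simp only [ContinuousLinearMap.add_apply, ContinuousLinearMap.comp_apply,
    ContinuousLinearMap.smul_apply]
  rw [hOmPi (Ks m), pT11, pT12, pT21, map_add K12, map_smul K12]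
  abel
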